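/- arXiv:2409.03744 — 2 statements merged into one kernel-verified Lean document; each statement's English description precedes it below -/
import Mathlib

section
/- Let V be a unitary operator on a finite-dimensional Hilbert space and let U_1,...,U_m be unitaries with an associated probability distribution p_1,...,p_m. If ‖U_j − V‖ ≤ a (operator norm) for all j, and ‖∑_j p_j U_j − V‖ ≤ b, then the quantum channel Λ(ρ) = ∑_j p_j U_j ρ U_j† satisfies ‖Λ(ρ) − V ρ V†‖₁ ≤ a² + 2b for every density matrix ρ. -/
open Matrix
open scoped ComplexOrder
open scoped Matrix.Norms.L2Operator

set_option maxHeartbeats 2000000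
set_option synthInstance.maxHeartbeats 1000000

noncomputable def opNorm {n : Type*} [Fintype n] [DecidableEq n] (A : Matrix n n ℂ) : ℝ :=
  ‖Matrix.toEuclideanCLM (𝕜 := ℂ) A‖

/-- The positive semidefinite square root (the definition `Matrix.PosSemidef.sqrt` of the older Mathlib). -/
noncomputable def Matrix.PosSemidef.sqrt {n : Type*} [Fintype n] [DecidableEq n] {A : Matrix n n ℂ}
    (hA : A.PosSemidef) : Matrix n n ℂ :=
  (hA.1.eigenvectorUnitary : Matrix n n ℂ) * diagonal ((↑) ∘ Real.sqrt ∘ hA.1.eigenvalues) *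
    (star hA.1.eigenvectorUnitary : Matrix n n ℂ)

noncomputable def traceNorm {n : Type*} [Fintype n] [DecidableEq n] (A : Matrix n n ℂ) : ℝ :=
  (Matrix.PosSemidef.sqrt (Matrix.posSemidef_conjTranspose_mul_self A)).trace.re

variable {n : Type*} [Fintype n] [DecidableEq n]


lemma opNorm_eq (A : Matrix n n ℂ) : opNorm A = ‖A‖ := rfl

lemma opNorm_nonneg (A : Matrix n n ℂ) : 0 ≤ opNorm A := norm_nonneg _

lemma opNorm_mul_le (A B : Matrix n n ℂ) : opNorm (A * B) ≤ opNorm A * opNorm B := by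
  simpa only [opNorm_eq] using Matrix.l2_opNorm_mul A B

lemma opNorm_conjTranspose (A : Matrix n n ℂ) : opNorm Aᴴ = opNorm A := by
  simpa only [opNorm_eq] using Matrix.l2_opNorm_conjTranspose A

lemma opNorm_unitary_le {U : Matrix n n ℂ} (hU : U ∈ Matrix.unitaryGroup n ℂ) :
    opNorm U ≤ 1 := by
  have h1 : Uᴴ * U = 1 := by
    simpa [Matrix.star_eq_conjTranspose] using Matrix.mem_unitaryGroup_iff'.mp hU
  have h2 : ‖Uᴴ * U‖ = ‖U‖ * ‖U‖ := Matrix.l2_opNorm_conjTranspose_mul_self U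
  rw [h1] at h2
  have h3 : ‖(1 : Matrix n n ℂ)‖ ≤ 1 := by
    rw [Matrix.l2_opNorm_def]
    have : (Matrix.toEuclideanLin.trans LinearMap.toContinuousLinearMap) (1 : Matrix n n ℂ)
        = ContinuousLinearMap.id ℂ (EuclideanSpace ℂ n) := by
      ext x
      simp [Matrix.toEuclideanLin_apply]
    rw [this]
    exact ContinuousLinearMap.norm_id_le
  rw [h2] at h3
  rw [opNorm_eq]
  nlinarith [norm_nonneg U]

lemma entry_le_opNorm (A : Matrix n n ℂ) (i : n) : ‖A i i‖ ≤ opNorm A := by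
  set x : EuclideanSpace ℂ n := EuclideanSpace.single i (1:ℂ) with hx
  set y : EuclideanSpace ℂ n := Matrix.toEuclideanCLM (𝕜 := ℂ) A x with hy
  have key : A i i = (inner ℂ x y : ℂ) := by
    rw [hy, hx, EuclideanSpace.inner_single_left]
    simp only [_root_.map_one, one_mul]
    have h0 : (EuclideanSpace.single i (1:ℂ)) = WithLp.toLp 2 (Pi.single i 1) := rfl
    rw [h0, Matrix.toEuclideanCLM_toLp]
    simp [Matrix.toLin'_apply, Matrix.mulVec_single]
  rw [key]
  have hxn : ‖x‖ = 1 := by simp [hx, EuclideanSpace.norm_single]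
  calc ‖(inner ℂ x y : ℂ)‖ ≤ ‖x‖ * ‖y‖ := norm_inner_le_norm _ _
    _ ≤ ‖x‖ * (opNorm A * ‖x‖) := by
      gcongr
      exact (Matrix.toEuclideanCLM (𝕜 := ℂ) A).le_opNorm _
    _ = opNorm A := by rw [hxn]; ring

lemma trace_psd_bound (X : Matrix n n ℂ) {ρ : Matrix n n ℂ} (hρ : ρ.PosSemidef) :
    ‖(X * ρ).trace‖ ≤ opNorm X * ρ.trace.re := by
  set Q : Matrix n n ℂ := (hρ.1.eigenvectorUnitary : Matrix n n ℂ) with hQdef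
  have hQ : Q ∈ Matrix.unitaryGroup n ℂ := (hρ.1.eigenvectorUnitary).2
  set d : n → ℝ := hρ.1.eigenvalues with hddef
  have hd : ∀ i, 0 ≤ d i := hρ.eigenvalues_nonneg
  have hspec : ρ = Q * Matrix.diagonal (RCLike.ofReal ∘ d) * Qᴴ := by
    simpa [Matrix.star_eq_conjTranspose] using hρ.1.spectral_theorem
  set M : Matrix n n ℂ := Qᴴ * X * Q with hMdef
  have hQQ : Qᴴ * Q = 1 := by
    simpa [Matrix.star_eq_conjTranspose] using Matrix.mem_unitaryGroup_iff'.mp hQ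
  have htr : (X * ρ).trace = ∑ i, M i i * (d i : ℂ) := by
    rw [hspec]
    have : X * (Q * Matrix.diagonal (RCLike.ofReal ∘ d) * Qᴴ)
        = (X * Q * Matrix.diagonal (RCLike.ofReal ∘ d)) * Qᴴ := by
      simp [mul_assoc]
    rw [this, Matrix.trace_mul_comm]
    have : Qᴴ * (X * Q * Matrix.diagonal (RCLike.ofReal ∘ d))
        = M * Matrix.diagonal (RCLike.ofReal ∘ d) := by simp [hMdef, mul_assoc]
    rw [this]
    simp [Matrix.trace, Matrix.diag, Matrix.mul_diagonal, Function.comp, RCLike.ofReal_alg]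
  have htrρ : ρ.trace.re = ∑ i, d i := by
    rw [hspec, Matrix.trace_mul_cycle, hQQ, one_mul, Matrix.trace_diagonal]
    simp [Function.comp, RCLike.ofReal_alg]
  have hM : opNorm M ≤ opNorm X := by
    have h1 : opNorm Qᴴ ≤ 1 := (opNorm_conjTranspose Q).le.trans (opNorm_unitary_le hQ)
    have h2 : opNorm Q ≤ 1 := opNorm_unitary_le hQ
    calc opNorm M ≤ opNorm (Qᴴ * X) * opNorm Q := opNorm_mul_le _ _
      _ ≤ opNorm (Qᴴ * X) * 1 := mul_le_mul_of_nonneg_left h2 (opNorm_nonneg _)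
      _ = opNorm (Qᴴ * X) := mul_one _
      _ ≤ opNorm Qᴴ * opNorm X := opNorm_mul_le _ _
      _ ≤ 1 * opNorm X := mul_le_mul_of_nonneg_right h1 (opNorm_nonneg _)
      _ = opNorm X := one_mul _
  rw [htr, htrρ]
  calc ‖∑ i, M i i * (d i : ℂ)‖ ≤ ∑ i, ‖M i i * (d i : ℂ)‖ := norm_sum_le _ _
    _ = ∑ i, ‖M i i‖ * d i := by
      refine Finset.sum_congr rfl fun i _ => ?_
      rw [norm_mul, Complex.norm_real, Real.norm_of_nonneg (hd i)]
    _ ≤ ∑ i, opNorm X * d i := by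
      refine Finset.sum_le_sum fun i _ => ?_
      exact mul_le_mul_of_nonneg_right ((entry_le_opNorm M i).trans hM) (hd i)
    _ = opNorm X * ∑ i, d i := by rw [Finset.mul_sum]


lemma herm_traceNorm_exists {H : Matrix n n ℂ} (hH : H.IsHermitian) :
    ∃ W ∈ Matrix.unitaryGroup n ℂ, traceNorm H = ((W * H).trace).re := by
  set Q : Matrix n n ℂ := (hH.eigenvectorUnitary : Matrix n n ℂ) with hQdef
  have hQ : Q ∈ Matrix.unitaryGroup n ℂ := (hH.eigenvectorUnitary).2
  set d : n → ℝ := hH.eigenvalues with hddef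
  have hQQ : Qᴴ * Q = 1 := by
    simpa [Matrix.star_eq_conjTranspose] using Matrix.mem_unitaryGroup_iff'.mp hQ
  have hQQ' : Q * Qᴴ = 1 := by
    simpa [Matrix.star_eq_conjTranspose] using Matrix.mem_unitaryGroup_iff.mp hQ
  have hspec : H = Q * Matrix.diagonal (fun i => (d i : ℂ)) * Qᴴ := by
    have := hH.spectral_theorem
    simpa [Matrix.star_eq_conjTranspose, Function.comp_def] using this
  -- the PSD square root of Hᴴ * H
  set P : Matrix n n ℂ := Q * Matrix.diagonal (fun i => ((|d i| : ℝ) : ℂ)) * Qᴴ with hPdef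
  have hPpsd : P.PosSemidef := by
    have hdiag : (Matrix.diagonal (fun i => ((|d i| : ℝ) : ℂ))).PosSemidef := by
      rw [Matrix.posSemidef_diagonal_iff]
      intro i
      exact Complex.zero_le_real.mpr (abs_nonneg (d i))
    simpa [Matrix.conjTranspose_conjTranspose] using hdiag.conjTranspose_mul_mul_same Qᴴ
  have hPsq : P ^ 2 = Hᴴ * H := by
    have hHH : Hᴴ = H := hH.eq
    rw [hHH, hspec, pow_two, hPdef]
    have : Q * Matrix.diagonal (fun i => ((|d i| : ℝ) : ℂ)) * Qᴴ *
        (Q * Matrix.diagonal (fun i => ((|d i| : ℝ) : ℂ)) * Qᴴ)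
        = Q * (Matrix.diagonal (fun i => ((|d i| : ℝ) : ℂ)) * (Qᴴ * Q) *
          Matrix.diagonal (fun i => ((|d i| : ℝ) : ℂ))) * Qᴴ := by
      simp only [mul_assoc]
    rw [this, hQQ, mul_one, Matrix.diagonal_mul_diagonal]
    have : Q * Matrix.diagonal (fun i => (d i : ℂ)) * Qᴴ *
        (Q * Matrix.diagonal (fun i => (d i : ℂ)) * Qᴴ)
        = Q * (Matrix.diagonal (fun i => (d i : ℂ)) * (Qᴴ * Q) *
          Matrix.diagonal (fun i => (d i : ℂ))) * Qᴴ := by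
      simp only [mul_assoc]
    rw [this, hQQ, mul_one, Matrix.diagonal_mul_diagonal]
    have hfun : (fun i => ((|d i| : ℝ) : ℂ) * ((|d i| : ℝ) : ℂ))
        = fun i => (d i : ℂ) * (d i : ℂ) := by
      funext i
      rw [← Complex.ofReal_mul, ← Complex.ofReal_mul, abs_mul_abs_self]
    rw [hfun]
  have hPeq : P = Matrix.PosSemidef.sqrt (Matrix.posSemidef_conjTranspose_mul_self H) := by
    have hA := Matrix.posSemidef_conjTranspose_mul_self H
    have h1 : Matrix.PosSemidef.sqrt hA = cfc Real.sqrt (Hᴴ * H) := by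
      rw [hA.1.cfc_eq]; rfl
    open scoped MatrixOrder in
    rw [h1, ← cfcₙ_eq_cfc (hf0 := Real.sqrt_zero), ← CFC.sqrt_eq_real_sqrt _ hA.nonneg]
    open scoped MatrixOrder in
    exact (CFC.sqrt_unique (by rw [← pow_two]; exact hPsq) hPpsd.nonneg).symm
  -- trace of P
  have htrP : traceNorm H = ∑ i, |d i| := by
    rw [traceNorm, ← hPeq, hPdef, Matrix.trace_mul_cycle, hQQ, one_mul,
      Matrix.trace_diagonal]
    simp
  -- the sign unitary
  set s : n → ℂ := fun i => if d i < 0 then -1 else 1 with hsdef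
  have hs : ∀ i, s i * starRingEnd ℂ (s i) = 1 := by
    intro i
    by_cases h : d i < 0 <;> simp [hsdef, h]
  set W : Matrix n n ℂ := Q * Matrix.diagonal s * Qᴴ with hWdef
  have hW : W ∈ Matrix.unitaryGroup n ℂ := by
    rw [Matrix.mem_unitaryGroup_iff, Matrix.star_eq_conjTranspose]
    have hWconj : Wᴴ = Q * Matrix.diagonal (fun i => starRingEnd ℂ (s i)) * Qᴴ := by
      simp [hWdef, Matrix.conjTranspose_mul, Matrix.diagonal_conjTranspose, mul_assoc]
      rfl
    rw [hWconj, hWdef]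
    have : Q * Matrix.diagonal s * Qᴴ * (Q * Matrix.diagonal (fun i => starRingEnd ℂ (s i)) * Qᴴ)
        = Q * (Matrix.diagonal s * (Qᴴ * Q) * Matrix.diagonal (fun i => starRingEnd ℂ (s i)))
          * Qᴴ := by simp only [mul_assoc]
    rw [this, hQQ, mul_one, Matrix.diagonal_mul_diagonal]
    have : (fun i => s i * starRingEnd ℂ (s i)) = fun _ => (1:ℂ) := funext hs
    rw [this, Matrix.diagonal_one, mul_one, hQQ']
  refine ⟨W, hW, ?_⟩
  have hWH : W * H = Q * Matrix.diagonal (fun i => s i * (d i : ℂ)) * Qᴴ := by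
    rw [hWdef, hspec]
    have : Q * Matrix.diagonal s * Qᴴ * (Q * Matrix.diagonal (fun i => (d i : ℂ)) * Qᴴ)
        = Q * (Matrix.diagonal s * (Qᴴ * Q) * Matrix.diagonal (fun i => (d i : ℂ))) * Qᴴ := by
      simp only [mul_assoc]
    rw [this, hQQ, mul_one, Matrix.diagonal_mul_diagonal]
  rw [hWH, Matrix.trace_mul_cycle, hQQ, one_mul, Matrix.trace_diagonal, htrP]
  have : ∀ i, s i * (d i : ℂ) = ((|d i| : ℝ) : ℂ) := by
    intro i
    by_cases h : d i < 0
    · simp [hsdef, h, abs_of_neg h]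
    · simp [hsdef, h, abs_of_nonneg (le_of_not_gt h)]
  simp only [this]
  rw [← Complex.ofReal_sum]
  simp

lemma conj_term_bound (W B C : Matrix n n ℂ) {ρ : Matrix n n ℂ} (hρ : ρ.PosSemidef)
    (hρ1 : ρ.trace.re = 1) (hW : opNorm W ≤ 1) {β γ : ℝ}
    (hB : opNorm B ≤ β) (hC : opNorm C ≤ γ) (hγ : 0 ≤ γ) :
    (W * (B * ρ * Cᴴ)).trace.re ≤ β * γ := by
  have h1 : W * (B * ρ * Cᴴ) = (W * B * ρ) * Cᴴ := by simp [mul_assoc]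
  have h2 : ((W * B * ρ) * Cᴴ).trace = ((Cᴴ * (W * B)) * ρ).trace := by
    rw [Matrix.trace_mul_comm]
    congr 1
    simp [mul_assoc]
  have hWB : opNorm (W * B) ≤ β := by
    calc opNorm (W * B) ≤ opNorm W * opNorm B := opNorm_mul_le _ _
      _ ≤ 1 * opNorm B := mul_le_mul_of_nonneg_right hW (opNorm_nonneg _)
      _ = opNorm B := one_mul _
      _ ≤ β := hB
  have hX : opNorm (Cᴴ * (W * B)) ≤ γ * β := by
    calc opNorm (Cᴴ * (W * B)) ≤ opNorm Cᴴ * opNorm (W * B) := opNorm_mul_le _ _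
      _ ≤ γ * β :=
        mul_le_mul ((opNorm_conjTranspose C).trans_le hC) hWB (opNorm_nonneg _) hγ
  rw [h1, h2]
  calc ((Cᴴ * (W * B)) * ρ).trace.re ≤ ‖((Cᴴ * (W * B)) * ρ).trace‖ := by
        exact Complex.re_le_norm _
    _ ≤ opNorm (Cᴴ * (W * B)) * ρ.trace.re := trace_psd_bound _ hρ
    _ = opNorm (Cᴴ * (W * B)) := by rw [hρ1, mul_one]
    _ ≤ γ * β := hX
    _ = β * γ := mul_comm _ _

/-- Hastings–Campbell mixing lemma (trace-norm form on a fixed density matrix). -/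
theorem mixing_lemma {N m : ℕ} (V : Matrix (Fin N) (Fin N) ℂ)
    (hV : V ∈ Matrix.unitaryGroup (Fin N) ℂ)
    (U : Fin m → Matrix (Fin N) (Fin N) ℂ)
    (hU : ∀ j, U j ∈ Matrix.unitaryGroup (Fin N) ℂ)
    (p : Fin m → ℝ) (hp : ∀ j, 0 ≤ p j) (hp1 : ∑ j, p j = 1)
    (a b : ℝ)
    (ha : ∀ j, opNorm (U j - V) ≤ a)
    (hb : opNorm ((∑ j, (p j : ℂ) • U j) - V) ≤ b)
    (ρ : Matrix (Fin N) (Fin N) ℂ) (hρ : ρ.PosSemidef) (hρ1 : ρ.trace = 1) :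
    traceNorm ((∑ j, (p j : ℂ) • (U j * ρ * (U j)ᴴ)) - V * ρ * Vᴴ) ≤ a ^ 2 + 2 * b := by
  classical
  have hρre : ρ.trace.re = 1 := by rw [hρ1]; simp
  have hps : (∑ j, (p j : ℂ)) = 1 := by
    rw [← Complex.ofReal_sum, hp1, Complex.ofReal_one]
  set E : Fin m → Matrix (Fin N) (Fin N) ℂ := fun j => U j - V with hE
  set F : Matrix (Fin N) (Fin N) ℂ := (∑ j, (p j : ℂ) • U j) - V with hF
  -- nonnegativity of a and b
  have hb0 : 0 ≤ b := (opNorm_nonneg F).trans hb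
  have hm : m ≠ 0 := by
    rintro rfl
    simp at hp1
  have ha0 : 0 ≤ a := (opNorm_nonneg (E ⟨0, Nat.pos_of_ne_zero hm⟩)).trans
    (ha ⟨0, Nat.pos_of_ne_zero hm⟩)
  -- Hermitian conjugate facts
  have hconj : ∀ X : Matrix (Fin N) (Fin N) ℂ, (X * ρ * Xᴴ)ᴴ = X * ρ * Xᴴ := by
    intro X
    simp [Matrix.conjTranspose_mul, hρ.1.eq, mul_assoc]
  -- algebraic decomposition
  have e1 : F * ρ * Vᴴ = (∑ j, (p j : ℂ) • (U j * ρ * Vᴴ)) - V * ρ * Vᴴ := by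
    rw [hF]
    simp [sub_mul, Finset.sum_mul, Matrix.smul_mul]
  have hFH : Fᴴ = (∑ j, (p j : ℂ) • (U j)ᴴ) - Vᴴ := by
    rw [hF]
    simp [Matrix.conjTranspose_sub, Matrix.conjTranspose_sum, Matrix.conjTranspose_smul,
      Complex.star_def, Complex.conj_ofReal]
  have e2 : V * ρ * Fᴴ = (∑ j, (p j : ℂ) • (V * ρ * (U j)ᴴ)) - V * ρ * Vᴴ := by
    rw [hFH]
    simp [mul_sub, Matrix.mul_sum, Matrix.mul_smul]
  have e3 : ∀ j, (p j : ℂ) • (E j * ρ * (E j)ᴴ)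
      = (p j : ℂ) • (U j * ρ * (U j)ᴴ) - (p j : ℂ) • (U j * ρ * Vᴴ)
        - (p j : ℂ) • (V * ρ * (U j)ᴴ) + (p j : ℂ) • (V * ρ * Vᴴ) := by
    intro j
    rw [hE]
    simp only [Matrix.conjTranspose_sub, sub_mul, mul_sub, smul_sub, smul_add]
    abel
  have e4 : ∑ j, (p j : ℂ) • (V * ρ * Vᴴ) = V * ρ * Vᴴ := by
    rw [← Finset.sum_smul, hps, one_smul]
  have key : (∑ j, (p j : ℂ) • (U j * ρ * (U j)ᴴ)) - V * ρ * Vᴴ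
      = F * ρ * Vᴴ + V * ρ * Fᴴ + ∑ j, (p j : ℂ) • (E j * ρ * (E j)ᴴ) := by
    rw [e1, e2]
    rw [Finset.sum_congr rfl fun j _ => e3 j]
    rw [Finset.sum_add_distrib, Finset.sum_sub_distrib, Finset.sum_sub_distrib, e4]
    abel
  -- Hermitianness
  have hHherm : ((∑ j, (p j : ℂ) • (U j * ρ * (U j)ᴴ)) - V * ρ * Vᴴ).IsHermitian := by
    show _ᴴ = _
    rw [Matrix.conjTranspose_sub, Matrix.conjTranspose_sum]
    rw [Finset.sum_congr rfl fun j _ => by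
      rw [Matrix.conjTranspose_smul, Complex.star_def, Complex.conj_ofReal, hconj (U j)]]
    rw [hconj V]
  obtain ⟨W, hW, hWtr⟩ := herm_traceNorm_exists hHherm
  rw [hWtr]
  have hWle : opNorm W ≤ 1 := opNorm_unitary_le hW
  -- split the trace
  have hsplit : (W * ((∑ j, (p j : ℂ) • (U j * ρ * (U j)ᴴ)) - V * ρ * Vᴴ)).trace.re
      = (W * (F * ρ * Vᴴ)).trace.re + (W * (V * ρ * Fᴴ)).trace.re
        + ∑ j, p j * (W * (E j * ρ * (E j)ᴴ)).trace.re := by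
    rw [key, mul_add, mul_add, Matrix.mul_sum]
    rw [Matrix.trace_add, Matrix.trace_add, Matrix.trace_sum]
    rw [Complex.add_re, Complex.add_re, Complex.re_sum]
    congr 1
    refine Finset.sum_congr rfl fun j _ => ?_
    rw [mul_smul_comm, Matrix.trace_smul, smul_eq_mul]
    simp [Complex.mul_re]
  rw [hsplit]
  -- bound each term
  have hVle : opNorm V ≤ 1 := opNorm_unitary_le hV
  have t1 : (W * (F * ρ * Vᴴ)).trace.re ≤ b * 1 :=
    conj_term_bound W F V hρ hρre hWle hb hVle zero_le_one
  have t2 : (W * (V * ρ * Fᴴ)).trace.re ≤ 1 * b :=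
    conj_term_bound W V F hρ hρre hWle hVle hb hb0
  have t3 : ∀ j, (W * (E j * ρ * (E j)ᴴ)).trace.re ≤ a * a := fun j =>
    conj_term_bound W (E j) (E j) hρ hρre hWle (ha j) (ha j) ha0
  have t3' : ∑ j, p j * (W * (E j * ρ * (E j)ᴴ)).trace.re ≤ a ^ 2 := by
    calc ∑ j, p j * (W * (E j * ρ * (E j)ᴴ)).trace.re
        ≤ ∑ j, p j * (a * a) :=
        Finset.sum_le_sum fun j _ => mul_le_mul_of_nonneg_left (t3 j) (hp j)
      _ = (∑ j, p j) * (a * a) := by rw [← Finset.sum_mul]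
      _ = a ^ 2 := by rw [hp1, one_mul, sq]
  linarith
end

section
/- Let (c_n) be real coefficients with |c_n| ≤ C e^{−qn} for all n ≥ d/2, where C,q > 0 and d ≥ 2 is an integer. Define ε = Ce^{−qd}/(1−e^{−q}) and let d* = ⌈d/2 + log(C)/(2q) − log(1−e^{−q})/(2q)⌉. Then (Ce^{−q d*}/(1−e^{−q}))² ≤ ε, i.e., the degree-d* truncation error squared is at most the degree-d truncation error. -/
/-- The cutoff degree d* ≈ d/2 guarantees the square of the degree-d* truncation error
is at most the degree-d truncation error ε. -/
theorem cutoff_degree_error (c : ℕ → ℝ) (C q : ℝ) (d : ℕ)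
    (hC : 0 < C) (hq : 0 < q) (hd : 2 ≤ d)
    (hdecay : ∀ n : ℕ, (d : ℝ) / 2 ≤ n → |c n| ≤ C * Real.exp (-q * n)) :
    (C * Real.exp (-q * (⌈(d : ℝ) / 2 + Real.log C / (2 * q)
          - Real.log (1 - Real.exp (-q)) / (2 * q)⌉ : ℤ)) / (1 - Real.exp (-q))) ^ 2
      ≤ C * Real.exp (-q * d) / (1 - Real.exp (-q)) := by
  have hr : 0 < 1 - Real.exp (-q) := by
    have : Real.exp (-q) < 1 := by
      rw [Real.exp_lt_one_iff]; linarith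
    linarith
  set r := 1 - Real.exp (-q) with hrdef
  set x := (d : ℝ) / 2 + Real.log C / (2 * q) - Real.log r / (2 * q) with hx
  have hceil : x ≤ (⌈x⌉ : ℝ) := Int.le_ceil x
  set E := Real.exp (-q * (⌈x⌉ : ℤ)) with hE
  set F := Real.exp (-q * d) with hF
  have hEpos : 0 < E := Real.exp_pos _
  have hFpos : 0 < F := Real.exp_pos _
  have key : C * E ^ 2 ≤ r * F := by
    have e1 : C * E ^ 2 = Real.exp (Real.log C + (-q * (⌈x⌉ : ℤ)) * 2) := by
      rw [Real.exp_add, Real.exp_log hC, hE, sq, ← Real.exp_add]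
      ring_nf
    have e2 : r * F = Real.exp (Real.log r + (-q * d)) := by
      rw [Real.exp_add, Real.exp_log hr, hF]
    rw [e1, e2]
    apply Real.exp_le_exp.mpr
    have h2q : (0:ℝ) < 2 * q := by linarith
    have := mul_le_mul_of_nonneg_left hceil (le_of_lt h2q)
    have hxval : 2 * q * x = q * d + Real.log C - Real.log r := by
      rw [hx]; field_simp
    push_cast
    nlinarith
  rw [div_pow, div_le_div_iff₀ (by positivity) hr]
  have := mul_le_mul_of_nonneg_left key (by positivity : (0:ℝ) ≤ C * r)
  nlinarith
end
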